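/- Let M_O, C_O ∈ ℝ^{6×6}, M, C ∈ ℝ^{6N×6N}, and G ∈ ℝ^{6N×6} be time-dependent (differentiable) matrices such that Ṁ_O − 2C_O and Ṁ − 2C are skew-symmetric and M is symmetric. Define M̃ = M_O + GᵀMG and C̃ = C_O + GᵀCG + GᵀMĠ. Then the matrix dM̃/dt − 2C̃ is skew-symmetric. -/

import Mathlib

open Matrix

/-- skew-symmetry of `dM̃/dt − 2C̃` for the coupled dynamics, where
`M̃ = M_O + GᵀMG` and `C̃ = C_O + GᵀCG + GᵀMĠ`. -/
theorem coupled_skew_symmetry (N : ℕ)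
    (M_O C_O M_O' : ℝ → Matrix (Fin 6) (Fin 6) ℝ)
    (M C M' : ℝ → Matrix (Fin N × Fin 6) (Fin N × Fin 6) ℝ)
    (G G' : ℝ → Matrix (Fin N × Fin 6) (Fin 6) ℝ)
    (hM_O' : ∀ t i j, HasDerivAt (fun s => M_O s i j) (M_O' t i j) t)
    (hM' : ∀ t i j, HasDerivAt (fun s => M s i j) (M' t i j) t)
    (hG' : ∀ t i j, HasDerivAt (fun s => G s i j) (G' t i j) t)
    (hMsym : ∀ t, (M t).IsSymm)
    (hskewO : ∀ t, (M_O' t - 2 • C_O t)ᵀ = -(M_O' t - 2 • C_O t))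
    (hskewM : ∀ t, (M' t - 2 • C t)ᵀ = -(M' t - 2 • C t)) :
    ∀ t,
      (∀ i j, HasDerivAt (fun s => (M_O s + (G s)ᵀ * M s * G s) i j)
        ((M_O' t + (G' t)ᵀ * M t * G t + (G t)ᵀ * M' t * G t
          + (G t)ᵀ * M t * G' t) i j) t) ∧
      ((M_O' t + (G' t)ᵀ * M t * G t + (G t)ᵀ * M' t * G t + (G t)ᵀ * M t * G' t)
          - 2 • (C_O t + (G t)ᵀ * C t * G t + (G t)ᵀ * M t * G' t))ᵀ =
        -((M_O' t + (G' t)ᵀ * M t * G t + (G t)ᵀ * M' t * G t + (G t)ᵀ * M t * G' t)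
          - 2 • (C_O t + (G t)ᵀ * C t * G t + (G t)ᵀ * M t * G' t)) := by
  intro t
  constructor
  · intro i j
    have key : ∀ l, HasDerivAt (fun s => (∑ k, G s k i * M s k l) * G s l j)
        ((∑ k, (G' t k i * M t k l + G t k i * M' t k l)) * G t l j
          + (∑ k, G t k i * M t k l) * G' t l j) t := by
      intro l
      exact (HasDerivAt.fun_sum (fun k _ => (hG' t k i).mul (hM' t k l))).mul (hG' t l j)
    have h2 : HasDerivAt (fun s => ∑ l, (∑ k, G s k i * M s k l) * G s l j)
        (∑ l, ((∑ k, (G' t k i * M t k l + G t k i * M' t k l)) * G t l j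
          + (∑ k, G t k i * M t k l) * G' t l j)) t :=
      HasDerivAt.fun_sum (fun l _ => key l)
    have h3 := (hM_O' t i j).add h2
    have e1 : (fun s => (M_O s + (G s)ᵀ * M s * G s) i j)
        = fun s => M_O s i j + ∑ l, (∑ k, G s k i * M s k l) * G s l j := by
      funext s
      simp [Matrix.add_apply, Matrix.mul_apply, Matrix.transpose_apply]
    have e2 : (M_O' t + (G' t)ᵀ * M t * G t + (G t)ᵀ * M' t * G t
          + (G t)ᵀ * M t * G' t) i j
        = M_O' t i j + ∑ l, ((∑ k, (G' t k i * M t k l + G t k i * M' t k l)) * G t l j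
          + (∑ k, G t k i * M t k l) * G' t l j) := by
      simp [Matrix.add_apply, Matrix.mul_apply, Matrix.transpose_apply,
        Finset.sum_add_distrib, add_mul]
      ring
    rw [e1, e2]
    exact h3
  · have hsym := (hMsym t)
    have hO := hskewO t
    have hM := hskewM t
    have expand :
        (M_O' t + (G' t)ᵀ * M t * G t + (G t)ᵀ * M' t * G t + (G t)ᵀ * M t * G' t)
          - 2 • (C_O t + (G t)ᵀ * C t * G t + (G t)ᵀ * M t * G' t)
        = (M_O' t - 2 • C_O t) + (G t)ᵀ * (M' t - 2 • C t) * G t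
          + ((G' t)ᵀ * M t * G t - (G t)ᵀ * M t * G' t) := by
      simp only [smul_sub, smul_add, Matrix.mul_sub, Matrix.sub_mul,
        Matrix.mul_smul, Matrix.smul_mul]
      abel
    rw [expand]
    simp only [Matrix.transpose_add, Matrix.transpose_sub, Matrix.transpose_mul,
      Matrix.transpose_transpose, hO, hM, hsym.eq]
    simp only [Matrix.mul_neg, Matrix.neg_mul, Matrix.mul_assoc]
    abel
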